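/- Let n ≥ 2 and p ≥ 2 be integers and set M = C(p+n−1, n−1) (a binomial coefficient), which is the number of monomials of (x₁ + ⋯ + xₙ)^p. For every integer N ≥ M² − 2M + 2 there exists a real polynomial g ∈ ℝ[x₁,…,xₙ] with non-negative coefficients such that g(x) = 1 whenever x₁ + ⋯ + xₙ = 1, every multi-index α ∈ ℕⁿ in the support of g satisfies p ∣ (α₁ + ⋯ + αₙ), and the support of g has exactly N elements. -/

import Mathlib

open MvPolynomial Finset

lemma coeff_sum_X_pow (n p : ℕ) (α : Fin n →₀ ℕ) :
    coeff α ((∑ i : Fin n, (X i : MvPolynomial (Fin n) ℝ)) ^ p)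
      = if (∑ i, α i) = p then (Nat.multinomial Finset.univ ⇑α : ℝ) else 0 := by
  rw [Finset.sum_pow_eq_sum_piAntidiag]
  have hmon : ∀ k : Fin n → ℕ,
      (∏ i : Fin n, (X i : MvPolynomial (Fin n) ℝ) ^ k i)
        = monomial (Finsupp.equivFunOnFinite.symm k) 1 := by
    intro k
    set κ : Fin n →₀ ℕ := Finsupp.equivFunOnFinite.symm k with hκ
    calc (∏ i : Fin n, (X i : MvPolynomial (Fin n) ℝ) ^ k i)
        = ∏ i : Fin n, (X i : MvPolynomial (Fin n) ℝ) ^ κ i := rfl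
      _ = ∏ i ∈ κ.support, (X i : MvPolynomial (Fin n) ℝ) ^ κ i :=
          (Finset.prod_subset (Finset.subset_univ _) (fun i _ hi => by
            rw [Finsupp.notMem_support_iff.mp hi, pow_zero])).symm
      _ = monomial κ 1 := prod_X_pow_eq_monomial
  simp_rw [hmon, coeff_sum]
  have hcoeff : ∀ k ∈ Finset.piAntidiag Finset.univ p,
      coeff α ((Nat.multinomial Finset.univ k : MvPolynomial (Fin n) ℝ)
          * monomial (Finsupp.equivFunOnFinite.symm k) 1)
        = if k = ⇑α then (Nat.multinomial Finset.univ k : ℝ) else 0 := by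
    intro k _
    rw [← C_eq_coe_nat, C_mul_monomial, mul_one, coeff_monomial]
    congr 1
    rw [eq_comm, Equiv.symm_apply_eq, eq_comm]; rfl
  rw [Finset.sum_congr rfl hcoeff, Finset.sum_ite_eq' _ (⇑α)]
  congr 1
  simp [Finset.mem_piAntidiag]

lemma mem_support_sum_X_pow (n p : ℕ) (α : Fin n →₀ ℕ) :
    α ∈ ((∑ i : Fin n, (X i : MvPolynomial (Fin n) ℝ)) ^ p).support ↔ (∑ i, α i) = p := by
  rw [mem_support_iff, coeff_sum_X_pow]
  split
  · next h => simpa [h] using (Nat.multinomial_pos Finset.univ ⇑α).ne'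
  · next h => simpa using h

lemma card_support_sum_X_pow (n p : ℕ) (hn : 1 ≤ n) :
    ((∑ i : Fin n, (X i : MvPolynomial (Fin n) ℝ)) ^ p).support.card
      = (p + n - 1).choose (n - 1) := by
  rw [← Fintype.card_coe]
  have e1 : {α // α ∈ ((∑ i : Fin n, (X i : MvPolynomial (Fin n) ℝ)) ^ p).support}
      ≃ {P : Fin n →₀ ℕ // (P.sum fun _ => id) = p} := by
    apply Equiv.subtypeEquivRight
    intro α
    rw [mem_support_sum_X_pow, Finsupp.sum_fintype]
    · rfl
    · intro i; rfl
  rw [Fintype.card_congr (e1.trans (Sym.equivNatSum (Fin n) p).symm),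
    Sym.card_sym_eq_choose, Fintype.card_fin]
  have h1 : n + p - 1 = p + n - 1 := by omega
  have h2 : n - 1 = (p + n - 1) - p := by omega
  rw [h1, h2, Nat.choose_symm (by omega)]

lemma support_monomial_mul' {n : ℕ} (u : Fin n →₀ ℕ) (c : ℝ) (hc : c ≠ 0)
    (q : MvPolynomial (Fin n) ℝ) :
    (monomial u c * q).support = q.support.map (addLeftEmbedding u) := by
  ext α
  simp only [mem_support_iff, coeff_monomial_mul', Finset.mem_map, addLeftEmbedding_apply]
  constructor
  · intro h
    split at h
    · next hle =>
      refine ⟨α - u, ?_, ?_⟩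
      · exact fun h0 => h (by rw [h0, mul_zero])
      · ext i
        simp only [Finsupp.add_apply, Finsupp.tsub_apply]
        have := hle i
        omega
    · exact absurd rfl h
  · rintro ⟨m, hm, rfl⟩
    rw [if_pos le_self_add, add_tsub_cancel_left]
    exact mul_ne_zero hc hm

lemma sum_single_apply (n k : ℕ) (i0 : Fin n) :
    (∑ i : Fin n, Finsupp.single i0 k i) = k := by
  have : ∀ i : Fin n, Finsupp.single i0 k i = if i = i0 then k else 0 := by
    intro i; rw [Finsupp.single_apply]
    by_cases h : i = i0
    · simp [h]
    · rw [if_neg (fun hh => h hh.symm), if_neg h]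
  rw [Finset.sum_congr rfl fun i _ => this i, Finset.sum_ite_eq']
  simp

lemma Nat.multinomial_single' (n p : ℕ) (i0 : Fin n) :
    Nat.multinomial Finset.univ ⇑(Finsupp.single i0 p) = 1 := by
  have hs := Nat.multinomial_spec Finset.univ ⇑(Finsupp.single i0 p)
  have hprod : (∏ i : Fin n, (Finsupp.single i0 p i).factorial) = p.factorial := by
    have : ∀ i : Fin n, (Finsupp.single i0 p i).factorial
        = if i0 = i then p.factorial else 1 := by
      intro i; rw [Finsupp.single_apply]; split <;> simp
    rw [Finset.prod_congr rfl fun i _ => this i, Finset.prod_ite_eq]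
    simp
  rw [hprod, sum_single_apply] at hs
  have := p.factorial_pos
  exact Nat.eq_of_mul_eq_mul_left this (by omega)

lemma exists_decomp (M N : ℕ) (hM : 3 ≤ M) (hN : M^2 - 2*M + 2 ≤ N) :
    ∃ K j, j ≤ K ∧ N = M + K * (M-1) + j := by
  obtain ⟨m, rfl⟩ : ∃ m, M = m + 3 := ⟨M - 3, by omega⟩
  have e1 : (m+3)^2 = m*m + 6*m + 9 := by ring
  rw [e1] at hN
  have hjlt := Nat.mod_lt (N - (m+3)) (show 0 < m+2 by omega)
  have hKge : m+1 ≤ (N - (m+3)) / (m+2) := by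
    rw [Nat.le_div_iff_mul_le (show 0 < m+2 by omega)]
    have e2 : (m+1)*(m+2) = m*m + 3*m + 2 := by ring
    rw [e2]
    revert hN; generalize m*m = q; intro hN; omega
  have hdm := Nat.div_add_mod (N - (m+3)) (m+2)
  refine ⟨(N - (m+3)) / (m+2), (N - (m+3)) % (m+2), by omega, ?_⟩
  have e3 : (N - (m+3)) / (m+2) * (m+3-1) = (m+2) * ((N - (m+3)) / (m+2)) := by
    rw [mul_comm]; norm_num
  rw [e3]
  revert hdm; generalize (m+2) * ((N - (m+3)) / (m+2)) = s; intro hdm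
  revert hN; generalize m*m = q; intro hN
  omega

/-- Gap termination for the group `⟨ω Iₙ⟩`: with `M = C(p+n-1, n-1)` the rank of
`(x₁ + ⋯ + xₙ)^p`, every `N ≥ M² - 2M + 2` is realized as the rank of an invariant
polynomial with non-negative coefficients equal to `1` on the hyperplane `∑ xᵢ = 1`. -/
theorem stmt_2 (n p : ℕ) (hn : 2 ≤ n) (hp : 2 ≤ p) (N : ℕ)
    (hN : ((p + n - 1).choose (n - 1)) ^ 2 - 2 * ((p + n - 1).choose (n - 1)) + 2 ≤ N) :
    ∃ g : MvPolynomial (Fin n) ℝ,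
      (∀ α, 0 ≤ g.coeff α) ∧
      (∀ x : Fin n → ℝ, (∑ i, x i) = 1 → eval x g = 1) ∧
      (∀ α ∈ g.support, p ∣ ∑ i, α i) ∧
      g.support.card = N := by
  classical
  set M := (p + n - 1).choose (n - 1) with hMdef
  set T : MvPolynomial (Fin n) ℝ := ∑ i, X i with hTdef
  have hp0 : 0 < p := by omega
  let i0 : Fin n := ⟨0, by omega⟩
  let i1 : Fin n := ⟨1, by omega⟩
  have hi01 : i0 ≠ i1 := by simp [i0, i1, Fin.ext_iff]
  have hcardT : (T ^ p).support.card = M := card_support_sum_X_pow n p (by omega)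
  -- M ≥ 3
  have hM3 : 3 ≤ M := by
    have hmem : ∀ β : Fin n →₀ ℕ, (∑ i, β i) = p → β ∈ (T ^ p).support :=
      fun β hβ => (mem_support_sum_X_pow n p β).mpr hβ
    set a : Fin n →₀ ℕ := Finsupp.single i0 p with ha
    set b : Fin n →₀ ℕ := Finsupp.single i1 p with hb
    set c : Fin n →₀ ℕ := Finsupp.single i0 (p-1) + Finsupp.single i1 1 with hc
    have hca : a ∈ (T ^ p).support := hmem a (sum_single_apply n p i0)
    have hcb : b ∈ (T ^ p).support := hmem b (sum_single_apply n p i1)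
    have hcc : c ∈ (T ^ p).support := by
      apply hmem
      have : ∀ i : Fin n, c i = Finsupp.single i0 (p-1) i + Finsupp.single i1 1 i :=
        fun i => rfl
      rw [Finset.sum_congr rfl fun i _ => this i, Finset.sum_add_distrib,
        sum_single_apply, sum_single_apply]
      omega
    have hvb : b i0 = 0 := by
      rw [hb, Finsupp.single_apply, if_neg (fun h => hi01 h.symm)]
    have hva : a i0 = p := by rw [ha, Finsupp.single_apply, if_pos rfl]
    have hne10 : ¬ i1 = i0 := fun h => hi01 h.symm
    have hvc : c i0 = p - 1 := by
      simp [hc, Finsupp.add_apply, Finsupp.single_apply, hne10]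
    have hvc1 : c i1 = 1 := by
      simp [hc, Finsupp.add_apply, Finsupp.single_apply, hi01]
    have hvb1 : b i1 = p := by rw [hb, Finsupp.single_apply, if_pos rfl]
    have hab : a ≠ b := fun h => by rw [h] at hva; omega
    have hac : a ≠ c := fun h => by rw [h] at hva; omega
    have hbc : b ≠ c := fun h => by rw [h] at hvb1; omega
    have hsub : ({a, b, c} : Finset (Fin n →₀ ℕ)) ⊆ (T ^ p).support := by
      intro x hx
      simp only [Finset.mem_insert, Finset.mem_singleton] at hx
      rcases hx with rfl | rfl | rfl <;> assumption
    have h3 : ({a, b, c} : Finset (Fin n →₀ ℕ)).card = 3 :=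
      Finset.card_eq_three.mpr ⟨a, b, c, hab, hac, hbc, rfl⟩
    calc 3 = ({a, b, c} : Finset (Fin n →₀ ℕ)).card := h3.symm
      _ ≤ (T ^ p).support.card := Finset.card_le_card hsub
      _ = M := hcardT
  obtain ⟨K, j, hjK, hNdec⟩ := exists_decomp M N hM3 hN
  -- the building block Q
  set u1 : Fin n →₀ ℕ := Finsupp.single i0 p with hu1
  set Q : MvPolynomial (Fin n) ℝ := T ^ p - monomial u1 1 with hQdef
  have hu1sum : (∑ i, u1 i) = p := sum_single_apply n p i0
  have hcoeffQ : ∀ α, coeff α Q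
      = if (∑ i, α i) = p ∧ α ≠ u1 then (Nat.multinomial Finset.univ ⇑α : ℝ) else 0 := by
    intro α
    rw [hQdef, coeff_sub, coeff_sum_X_pow, coeff_monomial]
    by_cases h1 : (∑ i, α i) = p
    · by_cases h2 : α = u1
      · rw [if_pos h1, if_pos (by rw [h2]), if_neg (by exact fun h => h.2 h2), h2,
          Nat.multinomial_single']
        norm_num
      · rw [if_pos h1, if_neg (fun h => h2 h.symm), if_pos ⟨h1, h2⟩, sub_zero]
    · have h2 : ¬ u1 = α := fun h => h1 (by rw [← h]; exact hu1sum)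
      rw [if_neg h1, if_neg h2, if_neg (fun h => h1 h.1), sub_zero]
  have hcoeffQnn : ∀ α, 0 ≤ coeff α Q := by
    intro α; rw [hcoeffQ]; split
    · exact Nat.cast_nonneg _
    · exact le_refl 0
  have hmemQ : ∀ α, α ∈ Q.support ↔ ((∑ i, α i) = p ∧ α ≠ u1) := by
    intro α
    rw [mem_support_iff, hcoeffQ]
    split
    · next h => simpa [h] using (Nat.multinomial_pos Finset.univ ⇑α).ne'
    · next h => simpa using h
  have hsuppQ : Q.support = (T ^ p).support.erase u1 := by
    ext α
    rw [hmemQ, Finset.mem_erase, mem_support_sum_X_pow, and_comm]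
  have hcardQ : Q.support.card = M - 1 := by
    rw [hsuppQ, Finset.card_erase_of_mem ((mem_support_sum_X_pow n p u1).mpr hu1sum), hcardT]
  -- weights
  set d : ℕ → ℝ := fun k => (2⁻¹ : ℝ) ^ (min k j) with hd
  have hdpos : ∀ k, 0 < d k := fun k => pow_pos (by norm_num) _
  -- the pieces
  set A : ℕ → MvPolynomial (Fin n) ℝ :=
    fun k => monomial (Finsupp.single i0 (p*k)) (d k) * Q with hA
  set B : ℕ → MvPolynomial (Fin n) ℝ :=
    fun k => monomial (Finsupp.single i0 (p*(k+1))) ((2⁻¹:ℝ)^(k+1)) with hB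
  set P3 : MvPolynomial (Fin n) ℝ :=
    monomial (Finsupp.single i0 (p*K)) (d K) * T ^ p with hP3
  -- support computations
  have hsuppA : ∀ k, (A k).support
      = Q.support.map (addLeftEmbedding (Finsupp.single i0 (p*k))) :=
    fun k => support_monomial_mul' _ _ (hdpos k).ne' _
  have hsuppB : ∀ k, (B k).support = {Finsupp.single i0 (p*(k+1))} := by
    intro k
    simp only [hB]
    rw [support_monomial, if_neg (by positivity)]
  have hsuppP3 : P3.support
      = (T ^ p).support.map (addLeftEmbedding (Finsupp.single i0 (p*K))) :=
    support_monomial_mul' _ _ (hdpos K).ne' _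
  have hsum_add : ∀ (γ β : Fin n →₀ ℕ), (∑ i, (γ + β) i) = (∑ i, γ i) + (∑ i, β i) := by
    intro γ β
    have : ∀ i : Fin n, (γ + β) i = γ i + β i := fun i => rfl
    rw [Finset.sum_congr rfl fun i _ => this i, Finset.sum_add_distrib]
  have hAmem : ∀ k α, α ∈ (A k).support →
      (∑ i, α i) = p * (k+1) ∧ α ≠ Finsupp.single i0 (p*(k+1)) := by
    intro k α hk
    rw [hsuppA k, Finset.mem_map] at hk
    obtain ⟨β, hβ, rfl⟩ := hk
    rw [addLeftEmbedding_apply]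
    have hβ' := (hmemQ β).mp hβ
    constructor
    · rw [hsum_add, sum_single_apply, hβ'.1, Nat.mul_succ]
    · intro hcontra
      apply hβ'.2
      have he : Finsupp.single i0 (p*(k+1))
          = Finsupp.single i0 (p*k) + Finsupp.single i0 p := by
        rw [← Finsupp.single_add, Nat.mul_succ]
      rw [he] at hcontra
      exact add_left_cancel hcontra
  have hBmem : ∀ k α, α ∈ (B k).support → α = Finsupp.single i0 (p*(k+1)) := by
    intro k α hk
    rw [hsuppB k, Finset.mem_singleton] at hk
    exact hk
  have hP3mem : ∀ α, α ∈ P3.support → (∑ i, α i) = p * (K+1) := by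
    intro α hk
    rw [hsuppP3, Finset.mem_map] at hk
    obtain ⟨β, hβ, rfl⟩ := hk
    rw [addLeftEmbedding_apply, hsum_add, sum_single_apply,
      (mem_support_sum_X_pow n p β).mp hβ, Nat.mul_succ]
  have hAdisj : ∀ k₁ k₂, k₁ ≠ k₂ → Disjoint (A k₁).support (A k₂).support := by
    intro k1 k2 hne
    rw [Finset.disjoint_left]
    intro α h1 h2
    have e1 := (hAmem k1 α h1).1
    have e2 := (hAmem k2 α h2).1
    have := Nat.eq_of_mul_eq_mul_left hp0 (e1.symm.trans e2)
    omega
  have hBdisj : ∀ k₁ k₂, k₁ ≠ k₂ → Disjoint (B k₁).support (B k₂).support := by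
    intro k1 k2 hne
    rw [Finset.disjoint_left]
    intro α h1 h2
    have e1 := hBmem k1 α h1
    have e2 := hBmem k2 α h2
    rw [e1] at e2
    have := Finsupp.single_injective i0 e2
    have := Nat.eq_of_mul_eq_mul_left hp0 this
    omega
  have hsumAsupp : (∑ k ∈ Finset.range K, A k).support
      = (Finset.range K).biUnion (fun k => (A k).support) :=
    by
      have := Finsupp.support_sum_eq_biUnion (g := fun k => AddMonoidAlgebra.coeff (A k))
        (Finset.range K) (fun k1 k2 h => hAdisj k1 k2 h)
      rw [← AddMonoidAlgebra.coeff_sum] at this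
      exact this
  have hsumBsupp : (∑ k ∈ Finset.range j, B k).support
      = (Finset.range j).biUnion (fun k => (B k).support) :=
    by
      have := Finsupp.support_sum_eq_biUnion (g := fun k => AddMonoidAlgebra.coeff (B k))
        (Finset.range j) (fun k1 k2 h => hBdisj k1 k2 h)
      rw [← AddMonoidAlgebra.coeff_sum] at this
      exact this
  have hABdisj : Disjoint ((Finset.range K).biUnion fun k => (A k).support)
      ((Finset.range j).biUnion fun k => (B k).support) := by
    rw [Finset.disjoint_left]
    intro α h1 h2
    rw [Finset.mem_biUnion] at h1 h2
    obtain ⟨k1, hk1, hm1⟩ := h1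
    obtain ⟨k2, hk2, hm2⟩ := h2
    have e1 := hAmem k1 α hm1
    have e2 := hBmem k2 α hm2
    have e3 : (∑ i, α i) = p*(k2+1) := by rw [e2, sum_single_apply]
    have hk12 : k1 = k2 := by
      have h := Nat.eq_of_mul_eq_mul_left hp0 (e1.1.symm.trans e3)
      omega
    exact e1.2 (by rw [hk12]; exact e2)
  have hP3disj : Disjoint (((Finset.range K).biUnion fun k => (A k).support)
      ∪ ((Finset.range j).biUnion fun k => (B k).support)) P3.support := by
    rw [Finset.disjoint_left]
    intro α h1 h2
    have hdeg := hP3mem α h2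
    rcases Finset.mem_union.mp h1 with h | h <;> rw [Finset.mem_biUnion] at h
    · obtain ⟨k, hk, hm⟩ := h
      rw [Finset.mem_range] at hk
      have e1 := (hAmem k α hm).1
      rw [e1] at hdeg
      have := Nat.eq_of_mul_eq_mul_left hp0 hdeg
      omega
    · obtain ⟨k, hk, hm⟩ := h
      rw [Finset.mem_range] at hk
      have e2 := hBmem k α hm
      have e3 : (∑ i, α i) = p*(k+1) := by rw [e2, sum_single_apply]
      rw [e3] at hdeg
      have := Nat.eq_of_mul_eq_mul_left hp0 hdeg
      omega
  have hgsupp : ((∑ k ∈ Finset.range K, A k) + (∑ k ∈ Finset.range j, B k) + P3).support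
      = (((Finset.range K).biUnion fun k => (A k).support)
        ∪ ((Finset.range j).biUnion fun k => (B k).support)) ∪ P3.support := by
    have hinner : ((∑ k ∈ Finset.range K, A k) + (∑ k ∈ Finset.range j, B k)).support
        = ((Finset.range K).biUnion fun k => (A k).support)
          ∪ ((Finset.range j).biUnion fun k => (B k).support) := by
      rw [← hsumAsupp, ← hsumBsupp] at hABdisj ⊢
      exact Finsupp.support_add_eq hABdisj
    have houter : Disjoint ((∑ k ∈ Finset.range K, A k)
        + (∑ k ∈ Finset.range j, B k)).support P3.support := by
      rw [hinner]; exact hP3disj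
    rw [← hinner]
    exact Finsupp.support_add_eq houter
  refine ⟨(∑ k ∈ Finset.range K, A k) + (∑ k ∈ Finset.range j, B k) + P3, ?_, ?_, ?_, ?_⟩
  -- part 1 : non-negative coefficients
  · intro α
    have hcoeffT : ∀ β, 0 ≤ coeff β (T ^ p) := by
      intro β; rw [hTdef, coeff_sum_X_pow]; split
      · exact Nat.cast_nonneg _
      · exact le_refl 0
    simp only [coeff_add, MvPolynomial.coeff_sum]
    apply add_nonneg (add_nonneg ?_ ?_) ?_
    · apply Finset.sum_nonneg; intro k _
      rw [hA, coeff_monomial_mul']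
      split
      · exact mul_nonneg (hdpos k).le (hcoeffQnn _)
      · exact le_refl 0
    · apply Finset.sum_nonneg; intro k _
      rw [hB, coeff_monomial]
      split
      · positivity
      · exact le_refl 0
    · rw [hP3, coeff_monomial_mul']
      split
      · exact mul_nonneg (hdpos K).le (hcoeffT _)
      · exact le_refl 0
  -- part 2 : evaluates to 1 on the hyperplane
  · intro x hx
    set y : ℝ := x i0 with hy
    have hevalT : eval x T = 1 := by
      rw [hTdef, map_sum]
      simpa using hx
    have hevalmon : ∀ (m : ℕ) (cc : ℝ),
        eval x (monomial (Finsupp.single i0 m) cc) = cc * y ^ m := by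
      intro m cc
      rw [eval_monomial, Finsupp.prod_single_index]
      exact pow_zero _
    have hevalQ : eval x Q = 1 - y ^ p := by
      rw [hQdef, map_sub, map_pow, hevalT, one_pow, hevalmon, one_mul]
    set F : ℕ → ℝ := fun k => d k * y ^ (p*k) with hF
    have key : ∀ k ∈ Finset.range K,
        eval x (A k) + (if k < j then (2⁻¹:ℝ)^(k+1) else 0) * y ^ (p*(k+1))
          = F k - F (k+1) := by
      intro k _
      rw [hA]
      simp only [map_mul, hevalmon, hevalQ]
      have hpk1 : p*(k+1) = p*k + p := by ring
      simp only [hF, hd, hpk1, pow_add]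
      by_cases hk : k < j
      · rw [min_eq_left hk.le, min_eq_left (by omega : k+1 ≤ j), if_pos hk]
        ring
      · rw [min_eq_right (by omega : j ≤ k), min_eq_right (by omega : j ≤ k+1), if_neg hk]
        ring
    have hBsum : (∑ k ∈ Finset.range j, eval x (B k))
        = ∑ k ∈ Finset.range K, (if k < j then (2⁻¹:ℝ)^(k+1) else 0) * y ^ (p*(k+1)) := by
      have hfilter : (Finset.range K).filter (fun k => k < j) = Finset.range j := by
        ext k; simp only [Finset.mem_filter, Finset.mem_range]; omega
      rw [Finset.sum_congr rfl (fun k _ => by rw [hB, hevalmon])]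
      rw [← hfilter, Finset.sum_filter]
      apply Finset.sum_congr rfl
      intro k _
      split
      · rfl
      · rw [zero_mul]
    rw [map_add, map_add, map_sum, map_sum, hBsum, ← Finset.sum_add_distrib,
      Finset.sum_congr rfl key, Finset.sum_range_sub' F K]
    have hP3eval : eval x P3 = F K := by
      rw [hP3, map_mul, hevalmon, map_pow, hevalT, one_pow, mul_one]
    rw [hP3eval]
    have : F 0 = 1 := by simp [hF, hd]
    rw [sub_add_cancel, this]
  -- part 3 : divisibility
  · intro α hα
    rw [hgsupp] at hα
    rcases Finset.mem_union.mp hα with h | h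
    · rcases Finset.mem_union.mp h with h' | h'
      · obtain ⟨k, _, hm⟩ := Finset.mem_biUnion.mp h'
        exact ⟨k+1, (hAmem k α hm).1⟩
      · obtain ⟨k, _, hm⟩ := Finset.mem_biUnion.mp h'
        exact ⟨k+1, by rw [hBmem k α hm, sum_single_apply]⟩
    · exact ⟨K+1, hP3mem α h⟩
  -- part 4 : cardinality
  · have hcA : ∀ k, (A k).support.card = M - 1 := by
      intro k; rw [hsuppA k, Finset.card_map, hcardQ]
    have hcB : ∀ k, (B k).support.card = 1 := by
      intro k; rw [hsuppB k, Finset.card_singleton]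
    have hcP : P3.support.card = M := by
      rw [hsuppP3, Finset.card_map, hcardT]
    rw [hgsupp, Finset.card_union_of_disjoint hP3disj,
      Finset.card_union_of_disjoint hABdisj,
      Finset.card_biUnion (fun k1 _ k2 _ h => hAdisj k1 k2 h),
      Finset.card_biUnion (fun k1 _ k2 _ h => hBdisj k1 k2 h),
      Finset.sum_congr rfl (fun k _ => hcA k),
      Finset.sum_congr rfl (fun k _ => hcB k),
      Finset.sum_const, Finset.sum_const, Finset.card_range, Finset.card_range,
      hcP, smul_eq_mul, smul_eq_mul, mul_one]
    rw [hNdec]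
    ring
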